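/- Let S = {x ∈ ℝ^N : ‖x‖₀ ≤ s} and x̄ ∈ S with Γ = supp(x̄). If |Γ| = s, then the Bouligand normal cone of S at x̄ (the polar of the Bouligand tangent cone) equals span{e_i : i ∉ Γ} = {d ∈ ℝ^N : d_i = 0 for all i ∈ Γ}; if |Γ| < s, then the Bouligand normal cone equals {0}. -/

import Mathlib

open Filter Topology

noncomputable section

/-- number of nonzero entries of `x` (the ℓ₀ "norm"). -/
def nrm0 {N : ℕ} (x : Fin N → ℝ) : ℕ :=
  (Finset.univ.filter (fun i => x i ≠ 0)).card

/-- support of `x` as a finset. -/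
def supp {N : ℕ} (x : Fin N → ℝ) : Finset (Fin N) :=
  Finset.univ.filter (fun i => x i ≠ 0)

/-- Bouligand tangent cone of `S` at `xb`. -/
def BTan {N : ℕ} (S : Set (Fin N → ℝ)) (xb : Fin N → ℝ) : Set (Fin N → ℝ) :=
  {d | ∃ (x : ℕ → Fin N → ℝ) (lam : ℕ → ℝ),
    (∀ k, x k ∈ S) ∧ (∀ k, 0 ≤ lam k) ∧
    Tendsto x atTop (nhds xb) ∧
    Tendsto (fun k => lam k • (x k - xb)) atTop (nhds d)}

/-- Clarke tangent cone of `S` at `xb`. -/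
def CTan {N : ℕ} (S : Set (Fin N → ℝ)) (xb : Fin N → ℝ) : Set (Fin N → ℝ) :=
  {d | ∀ (x : ℕ → Fin N → ℝ) (lam : ℕ → ℝ),
    (∀ k, x k ∈ S) → (∀ k, 0 < lam k) →
    Tendsto x atTop (nhds xb) → Tendsto lam atTop (nhds (0 : ℝ)) →
    ∃ y : ℕ → Fin N → ℝ, Tendsto y atTop (nhds d) ∧ ∀ k, x k + lam k • y k ∈ S}

/-- set-valued Euclidean projection onto `Ω`. -/
def Proj {N : ℕ} (Ω : Set (Fin N → ℝ)) (x : Fin N → ℝ) : Set (Fin N → ℝ) :=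
  {y | y ∈ Ω ∧ ∀ z ∈ Ω, ∑ i, (x i - y i) ^ 2 ≤ ∑ i, (x i - z i) ^ 2}

lemma mem_btan_aux {N s : ℕ} (xb v : Fin N → ℝ)
    (h : ∀ t : ℝ, nrm0 (xb + t • v) ≤ s) :
    v ∈ BTan {x : Fin N → ℝ | nrm0 x ≤ s} xb := by
  refine ⟨fun k => xb + ((k:ℝ)+1)⁻¹ • v, fun k => (k:ℝ)+1, fun k => h _,
    fun k => by positivity, ?_, ?_⟩
  · have h0 : Tendsto (fun k : ℕ => ((k:ℝ)+1)⁻¹) atTop (nhds 0) := by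
      simpa using tendsto_one_div_add_atTop_nhds_zero_nat (𝕜 := ℝ)
    have := (h0.smul_const v).const_add xb
    simpa using this
  · have key : ∀ k : ℕ, ((k:ℝ)+1) • ((xb + ((k:ℝ)+1)⁻¹ • v) - xb) = v := by
      intro k
      have hk : ((k:ℝ)+1) ≠ 0 := by positivity
      simp [add_sub_cancel_left, smul_smul, mul_inv_cancel₀ hk]
    exact Tendsto.congr (fun k => (key k).symm)
      (tendsto_const_nhds : Tendsto (fun _ : ℕ => v) atTop (nhds v))

lemma supp_add_single {N : ℕ} (xb : Fin N → ℝ) (i : Fin N) (t : ℝ) :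
    supp (xb + t • (Pi.single i 1 : Fin N → ℝ)) ⊆ insert i (supp xb) := by
  intro j hj
  simp only [supp, Finset.mem_filter, Finset.mem_univ, true_and] at hj
  by_cases hji : j = i
  · simp [hji]
  · apply Finset.mem_insert.mpr
    right
    simp only [supp, Finset.mem_filter, Finset.mem_univ, true_and]
    intro h0
    apply hj
    simp [Pi.single_apply, hji, h0]

lemma single_mem_btan {N s : ℕ} (xb : Fin N → ℝ) (i : Fin N) (c : ℝ)
    (h : (insert i (supp xb)).card ≤ s) :
    (c • (Pi.single i 1 : Fin N → ℝ)) ∈ BTan {x : Fin N → ℝ | nrm0 x ≤ s} xb := by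
  apply mem_btan_aux
  intro t
  have : nrm0 (xb + t • (c • (Pi.single i 1 : Fin N → ℝ))) =
      (supp (xb + (t*c) • (Pi.single i 1 : Fin N → ℝ))).card := by
    rw [smul_smul]; rfl
  rw [this]
  exact le_trans (Finset.card_le_card (supp_add_single xb i (t*c))) h

lemma btan_zero_off_supp {N s : ℕ} (xb : Fin N → ℝ) (hcard : (supp xb).card = s)
    {z : Fin N → ℝ} (hz : z ∈ BTan {x : Fin N → ℝ | nrm0 x ≤ s} xb) :
    ∀ j, j ∉ supp xb → z j = 0 := by
  obtain ⟨x, lam, hxS, hlam, hx, hzlim⟩ := hz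
  intro j hj
  have hev : ∀ᶠ k in atTop, ∀ i ∈ supp xb, x k i ≠ 0 := by
    rw [Filter.eventually_all_finset]
    intro i hi
    have hxi : Tendsto (fun k => x k i) atTop (nhds (xb i)) := by
      exact (tendsto_pi_nhds.mp hx) i
    have hne : xb i ≠ 0 := by
      simpa [supp] using hi
    exact hxi.eventually_ne hne
  have hxbj : xb j = 0 := by
    by_contra h
    exact hj (by simp [supp, h])
  have hev2 : ∀ᶠ k in atTop, x k j = 0 := by
    filter_upwards [hev] with k hk
    have hsub : supp xb ⊆ supp (x k) := by
      intro i hi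
      simp only [supp, Finset.mem_filter, Finset.mem_univ, true_and]
      exact hk i hi
    have hcard2 : (supp (x k)).card ≤ (supp xb).card := by
      rw [hcard]; exact hxS k
    have heq : supp xb = supp (x k) := Finset.eq_of_subset_of_card_le hsub hcard2
    by_contra h0
    exact hj (heq ▸ (by simp [supp, h0] : j ∈ supp (x k)))
  have hzj : Tendsto (fun k => lam k * (x k j - xb j)) atTop (nhds (z j)) := by
    have := (tendsto_pi_nhds.mp hzlim) j
    simpa using this
  have hz0 : Tendsto (fun k => lam k * (x k j - xb j)) atTop (nhds 0) := by
    refine (tendsto_const_nhds : Tendsto (fun _ : ℕ => (0:ℝ)) atTop (nhds 0)).congr' ?_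
    filter_upwards [hev2] with k hk
    simp [hk, hxbj]
  exact tendsto_nhds_unique hzj hz0

example : True := trivial

lemma polar_subset_ker {N s : ℕ} (xb : Fin N → ℝ)
    (hins : ∀ i ∈ supp xb, (insert i (supp xb)).card ≤ s)
    {d : Fin N → ℝ}
    (hd : ∀ z ∈ BTan {x : Fin N → ℝ | nrm0 x ≤ s} xb, ∑ i, d i * z i ≤ 0) :
    ∀ i ∈ supp xb, d i = 0 := by
  intro i hi
  have h1 := hd _ (single_mem_btan xb i 1 (hins i hi))
  have h2 := hd _ (single_mem_btan xb i (-1) (hins i hi))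
  simp only [Pi.smul_apply, Pi.single_apply, smul_eq_mul, mul_ite, mul_one, mul_zero,
    Finset.sum_ite_eq', Finset.mem_univ, if_true] at h1 h2
  linarith


/-- Bouligand normal cone of the s-sparse set: if the support of `xb` has exactly `s`
elements it equals `span {e i : i ∉ supp xb} = {d : d i = 0 for i ∈ supp xb}`,
and if it has fewer than `s` elements it equals `{0}`. -/
theorem stmt2 {N s : ℕ} (hs : s < N) (xb : Fin N → ℝ)
    (hxb : nrm0 xb ≤ s) :
    ((supp xb).card = s →
      {d : Fin N → ℝ | ∀ z ∈ BTan {x : Fin N → ℝ | nrm0 x ≤ s} xb, ∑ i, d i * z i ≤ 0}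
        = {d : Fin N → ℝ | ∀ i ∈ supp xb, d i = 0} ∧
      {d : Fin N → ℝ | ∀ i ∈ supp xb, d i = 0}
        = (Submodule.span ℝ
            ((fun i => (Pi.single i 1 : Fin N → ℝ)) '' {i : Fin N | i ∉ supp xb}) :
              Set (Fin N → ℝ))) ∧
    ((supp xb).card < s →
      {d : Fin N → ℝ | ∀ z ∈ BTan {x : Fin N → ℝ | nrm0 x ≤ s} xb, ∑ i, d i * z i ≤ 0}
        = {(0 : Fin N → ℝ)}) := by
  constructor
  · intro hcard
    constructor
    · ext d
      simp only [Set.mem_setOf_eq]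
      constructor
      · intro hd
        refine polar_subset_ker xb ?_ hd
        intro i hi
        rw [Finset.insert_eq_self.mpr hi, hcard]
      · intro hd z hz
        have hzoff := btan_zero_off_supp xb hcard hz
        have : ∀ i ∈ Finset.univ, d i * z i = 0 := by
          intro i _
          by_cases hi : i ∈ supp xb
          · simp [hd i hi]
          · simp [hzoff i hi]
        rw [Finset.sum_congr rfl this]
        simp
    · ext d
      simp only [Set.mem_setOf_eq, SetLike.mem_coe]
      constructor
      · intro hd
        have hrep : d = ∑ i, d i • (Pi.single i 1 : Fin N → ℝ) := by
          funext j
          simp [Finset.sum_apply, Pi.single_apply, Finset.sum_ite_eq']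
        rw [hrep]
        apply Submodule.sum_mem
        intro i _
        by_cases hi : i ∈ supp xb
        · simp [hd i hi]
        · exact Submodule.smul_mem _ _ (Submodule.subset_span ⟨i, hi, rfl⟩)
      · intro hd
        have hK : Submodule.span ℝ
            ((fun i => (Pi.single i 1 : Fin N → ℝ)) '' {i : Fin N | i ∉ supp xb}) ≤
            Submodule.pi (↑(supp xb) : Set (Fin N)) (fun _ => (⊥ : Submodule ℝ ℝ)) := by
          rw [Submodule.span_le]
          rintro _ ⟨i, hi, rfl⟩
          intro j hj
          have hji : j ≠ i := fun h => hi (h ▸ hj)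
          simp [Pi.single_apply, hji]
        have := hK hd
        intro i hi
        simpa using this i hi
  · intro hcard
    ext d
    simp only [Set.mem_setOf_eq, Set.mem_singleton_iff]
    constructor
    · intro hd
      funext i
      have hins : (insert i (supp xb)).card ≤ s := by
        calc (insert i (supp xb)).card ≤ (supp xb).card + 1 := Finset.card_insert_le _ _
        _ ≤ s := hcard
      have h1 := hd _ (single_mem_btan xb i 1 hins)
      have h2 := hd _ (single_mem_btan xb i (-1) hins)
      simp only [Pi.smul_apply, Pi.single_apply, smul_eq_mul, mul_ite, mul_one, mul_zero,
        Finset.sum_ite_eq', Finset.mem_univ, if_true] at h1 h2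
      have : d i = 0 := by linarith
      simpa using this
    · rintro rfl z _
      simp
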